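/- Fix an integer n ≥ 3. For every η > 0 there exists N₀ such that for every integer N ≥ N₀, setting h = 1/N, one has S^n_h ≥ S^n + π²/( 8(n−1)/(n(n−2)) + h + |log h| )² − η/(log h)². -/

import Mathlib

open MeasureTheory Real Set Filter

noncomputable section

/-- Membership in the finite element space `V_h` with `h = 1/N`: continuous on `[0,1]`
and affine on each mesh interval `[k/N, (k+1)/N]`. -/
def MemVh (N : ℕ) (v : ℝ → ℝ) : Prop :=
  ContinuousOn v (Set.Icc 0 1) ∧
  ∀ k : ℕ, k < N → ∃ a b : ℝ,
    ∀ x ∈ Set.Icc ((k : ℝ) / (N : ℝ)) (((k : ℝ) + 1) / (N : ℝ)), v x = a * x + b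

/-- The discrete Hardy constant `S^n_h` in dimension `n ≥ 3`, for `h = 1/N`. -/
def SdiscN (n N : ℕ) : ℝ :=
  sInf { s : ℝ | ∃ v : ℝ → ℝ, MemVh N v ∧ v 1 = 0 ∧ (∃ x ∈ Set.Icc (0:ℝ) 1, v x ≠ 0) ∧
    s = (∫ r in (0:ℝ)..1, r ^ (n - 1) * (deriv v r) ^ 2)
        / (∫ r in (0:ℝ)..1, r ^ (n - 3) * (v r) ^ 2) }

def Kc (m : ℕ) (β h r : ℝ) : ℝ :=
  ((m:ℝ)+1)/2 + β * (Real.cos (β*(h - Real.log r)) / Real.sin (β*(h - Real.log r)))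

def Gb (m : ℕ) (β h a b r : ℝ) : ℝ := -(Kc m β h r) * r^(m+1) * (a*r+b)^2

lemma hasDerivAt_Gb (m : ℕ) (β h a b : ℝ) (x : ℝ) (hx : 0 < x)
    (hs : Real.sin (β*(h - Real.log x)) ≠ 0) :
    HasDerivAt (Gb m β h a b)
      (x^(m+2)*a^2 - (((m:ℝ)+1)^2/4 + β^2) * (x^m*(a*x+b)^2)
        - x^m*(a*x + Kc m β h x*(a*x+b))^2) x := by
  have hθ : HasDerivAt (fun r => β*(h - Real.log r)) (β * -x⁻¹) x :=
    ((Real.hasDerivAt_log hx.ne').const_sub h).const_mul β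
  have hcos : HasDerivAt (fun r => Real.cos (β*(h - Real.log r)))
      (-Real.sin (β*(h - Real.log x)) * (β * -x⁻¹)) x :=
    (Real.hasDerivAt_cos _).comp x hθ
  have hsin : HasDerivAt (fun r => Real.sin (β*(h - Real.log r)))
      (Real.cos (β*(h - Real.log x)) * (β * -x⁻¹)) x :=
    (Real.hasDerivAt_sin _).comp x hθ
  have hK : HasDerivAt (fun r => Kc m β h r)
      (β * (((-Real.sin (β*(h - Real.log x)) * (β * -x⁻¹)) * Real.sin (β*(h - Real.log x))
        - Real.cos (β*(h - Real.log x)) * (Real.cos (β*(h - Real.log x)) * (β * -x⁻¹)))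
        / (Real.sin (β*(h - Real.log x)))^2)) x := by
    exact ((hcos.div hsin hs).const_mul β).const_add _
  have hp : HasDerivAt (fun r : ℝ => r^(m+1)) (((m:ℝ)+1) * x^m) x := by
    simpa using hasDerivAt_pow (m+1) x
  have hw : HasDerivAt (fun r : ℝ => (a*r+b)^2) (2*(a*x+b)*a) x := by
    have : HasDerivAt (fun r : ℝ => a*r+b) a x := by
      simpa using ((hasDerivAt_id x).const_mul a).add_const b
    exact this.fun_pow 2 |>.congr_deriv (by ring)
  have hG : HasDerivAt (Gb m β h a b) _ x := ((hK.neg.mul hp).mul hw)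
  convert hG using 1
  have hc2 : Real.cos (β*(h - Real.log x))^2 = 1 - Real.sin (β*(h - Real.log x))^2 := by
    have := Real.sin_sq_add_cos_sq (β*(h - Real.log x)); linarith
  simp only [Kc, Pi.neg_apply, Pi.mul_apply]
  field_simp
  ring_nf


def Db (m : ℕ) (β h a b x : ℝ) : ℝ :=
  x^(m+2)*a^2 - (((m:ℝ)+1)^2/4 + β^2) * (x^m*(a*x+b)^2)
    - x^m*(a*x + Kc m β h x*(a*x+b))^2

lemma sin_pos_on (β h x : ℝ) (hh : 0 < h) (hβ : 0 < β) (hπ : β*(h - Real.log h) < π)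
    (hx1 : h ≤ x) (hx2 : x ≤ 1) : 0 < Real.sin (β*(h - Real.log x)) := by
  have hx0 : 0 < x := lt_of_lt_of_le hh hx1
  apply Real.sin_pos_of_pos_of_lt_pi
  · have : Real.log x ≤ 0 := Real.log_nonpos (le_of_lt hx0) hx2
    nlinarith
  · have : Real.log h ≤ Real.log x := Real.log_le_log hh hx1
    nlinarith

lemma contOn_Kc (m : ℕ) (β h c d : ℝ) (hh : 0 < h) (hc : h ≤ c) (hβ : 0 < β)
    (hd : d ≤ 1) (hπ : β*(h - Real.log h) < π) :
    ContinuousOn (fun x => Kc m β h x) (Icc c d) := by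
  have hsub : Icc c d ⊆ {x : ℝ | x ≠ 0} := by
    intro x hx; exact (lt_of_lt_of_le hh (le_trans hc hx.1)).ne'
  have hθc : ContinuousOn (fun x:ℝ => β*(h - Real.log x)) (Icc c d) :=
    (continuousOn_const.sub (Real.continuousOn_log.mono hsub)).const_smul β
  apply ContinuousOn.add continuousOn_const
  apply ContinuousOn.mul continuousOn_const
  apply ContinuousOn.div (Real.continuous_cos.comp_continuousOn hθc)
    (Real.continuous_sin.comp_continuousOn hθc)
  intro x hx
  exact (sin_pos_on β h x hh hβ hπ (le_trans hc hx.1) (le_trans hx.2 hd)).ne'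

lemma interval_ineq (m : ℕ) (β h a b c d : ℝ) (hh : 0 < h) (hc : h ≤ c) (hcd : c ≤ d)
    (hd : d ≤ 1) (hβ : 0 < β) (hπ : β*(h - Real.log h) < π) :
    (((m:ℝ)+1)^2/4 + β^2) * ∫ x in c..d, x^m*(a*x+b)^2 ≤
      (∫ x in c..d, x^(m+2)*a^2) - (Gb m β h a b d - Gb m β h a b c) := by
  have hKc := contOn_Kc m β h c d hh hc hβ hd hπ
  have huIcc : uIcc c d = Icc c d := uIcc_of_le hcd
  have hmemx : ∀ x ∈ Icc c d, 0 < x ∧ Real.sin (β*(h - Real.log x)) ≠ 0 := by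
    intro x hx
    exact ⟨lt_of_lt_of_le hh (le_trans hc hx.1),
      (sin_pos_on β h x hh hβ hπ (le_trans hc hx.1) (le_trans hx.2 hd)).ne'⟩
  -- continuity of Db on Icc c d
  have hDbc : ContinuousOn (fun x => Db m β h a b x) (Icc c d) := by
    apply ContinuousOn.sub
    apply ContinuousOn.sub
    · exact ((continuousOn_pow _).mul continuousOn_const)
    · exact continuousOn_const.mul ((continuousOn_pow _).mul (by fun_prop))
    · exact (continuousOn_pow _).mul
        (((by fun_prop : ContinuousOn (fun x:ℝ => a*x) (Icc c d)).add
          (hKc.mul (by fun_prop))).pow 2)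
  have hDbInt : IntervalIntegrable (fun x => Db m β h a b x) volume c d :=
    (hDbc.mono (by rw [huIcc])).intervalIntegrable
  have hFTC : ∫ x in c..d, Db m β h a b x = Gb m β h a b d - Gb m β h a b c := by
    apply intervalIntegral.integral_eq_sub_of_hasDerivAt
    · intro x hx
      rw [huIcc] at hx
      exact hasDerivAt_Gb m β h a b x (hmemx x hx).1 (hmemx x hx).2
    · exact hDbInt
  have hmono : ∫ x in c..d, Db m β h a b x ≤
      ∫ x in c..d, (x^(m+2)*a^2 - (((m:ℝ)+1)^2/4 + β^2) * (x^m*(a*x+b)^2)) := by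
    apply intervalIntegral.integral_mono_on hcd hDbInt
    · apply ContinuousOn.intervalIntegrable
      rw [huIcc]; fun_prop
    · intro x hx
      have h0 : 0 ≤ x := le_of_lt (hmemx x hx).1
      have : 0 ≤ x^m*(a*x + Kc m β h x*(a*x+b))^2 := by positivity
      simp only [Db]; linarith
  have hsplit : ∫ x in c..d, (x^(m+2)*a^2 - (((m:ℝ)+1)^2/4 + β^2) * (x^m*(a*x+b)^2))
      = (∫ x in c..d, x^(m+2)*a^2) - (((m:ℝ)+1)^2/4 + β^2) * ∫ x in c..d, x^m*(a*x+b)^2 := by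
    rw [intervalIntegral.integral_sub, intervalIntegral.integral_const_mul]
    · apply ContinuousOn.intervalIntegrable; rw [huIcc]; fun_prop
    · apply ContinuousOn.intervalIntegrable; rw [huIcc]; fun_prop
  rw [hFTC] at hmono
  rw [hsplit] at hmono
  linarith

lemma integral_poly (m : ℕ) (a b h : ℝ) :
    ∫ x in (0:ℝ)..h, x^m*(a*x+b)^2
      = a^2*h^(m+3)/((m:ℝ)+3) + 2*a*b*h^(m+2)/((m:ℝ)+2) + b^2*h^(m+1)/((m:ℝ)+1) := by
  have hcongr : ∀ x ∈ uIcc (0:ℝ) h, x^m*(a*x+b)^2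
      = a^2*x^(m+2) + (2*a*b)*x^(m+1) + b^2*x^m := fun x _ => by ring
  rw [intervalIntegral.integral_congr hcongr]
  have i1 : IntervalIntegrable (fun x:ℝ => a^2*x^(m+2)) volume 0 h := by
    apply Continuous.intervalIntegrable; fun_prop
  have i2 : IntervalIntegrable (fun x:ℝ => (2*a*b)*x^(m+1)) volume 0 h := by
    apply Continuous.intervalIntegrable; fun_prop
  have i3 : IntervalIntegrable (fun x:ℝ => b^2*x^m) volume 0 h := by
    apply Continuous.intervalIntegrable; fun_prop
  rw [intervalIntegral.integral_add (i1.add i2) i3, intervalIntegral.integral_add i1 i2,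
    intervalIntegral.integral_const_mul, intervalIntegral.integral_const_mul,
    intervalIntegral.integral_const_mul, integral_pow, integral_pow, integral_pow]
  push_cast
  ring

lemma integral_mono_pow (m : ℕ) (a h : ℝ) :
    ∫ x in (0:ℝ)..h, x^(m+2)*a^2 = h^(m+3)/((m:ℝ)+3)*a^2 := by
  rw [intervalIntegral.integral_mul_const, integral_pow]
  push_cast; ring

lemma first_interval (m : ℕ) (β h a b μ Kh A B C : ℝ) (hh : 0 < h)
    (hKh : Kh = Kc m β h h)
    (hA : A = 1/((m:ℝ)+3) - 2*μ/(((m:ℝ)+3)*((m:ℝ)+2)*((m:ℝ)+1)))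
    (hB : B = μ/(((m:ℝ)+2)*((m:ℝ)+1)))
    (hC : C = Kh - μ/((m:ℝ)+1))
    (hA0 : 0 < A) (hACB : B^2 ≤ A*C) :
    μ * ∫ x in (0:ℝ)..h, x^m*(a*x+b)^2 ≤
      (∫ x in (0:ℝ)..h, x^(m+2)*a^2) - (Gb m β h a b h - Gb m β h a b 0) := by
  have hG0 : Gb m β h a b 0 = 0 := by simp [Gb]
  have key : 0 ≤ A*(a*h)^2 + 2*B*((a*h)*(a*h+b)) + C*(a*h+b)^2 := by
    nlinarith [sq_nonneg (A*(a*h) + B*(a*h+b)), sq_nonneg (a*h+b), mul_pos hA0 hA0]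
  have hpow : 0 ≤ h^(m+1) := by positivity
  have hkey2 : 0 ≤ h^(m+1) * (A*(a*h)^2 + 2*B*((a*h)*(a*h+b)) + C*(a*h+b)^2) :=
    mul_nonneg hpow key
  rw [integral_poly, integral_mono_pow, hG0]
  have hm1 : ((m:ℝ)+1) ≠ 0 := by positivity
  have hm2 : ((m:ℝ)+2) ≠ 0 := by positivity
  have hm3 : ((m:ℝ)+3) ≠ 0 := by positivity
  have hE : h^(m+3)/((m:ℝ)+3)*a^2 - (Gb m β h a b h - 0)
      - μ * (a^2*h^(m+3)/((m:ℝ)+3) + 2*a*b*h^(m+2)/((m:ℝ)+2) + b^2*h^(m+1)/((m:ℝ)+1))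
      = h^(m+1) * (A*(a*h)^2 + 2*B*((a*h)*(a*h+b)) + C*(a*h+b)^2) := by
    simp only [Gb, ← hKh, hA, hB, hC]
    have e1 : h^(m+3) = h^(m+1)*h^2 := by ring
    have e2 : h^(m+2) = h^(m+1)*h := by ring
    rw [e1, e2]
    field_simp
    ring
  linarith [hE, hkey2]

lemma global_ineq (m N : ℕ) (hN : 1 ≤ N) (β : ℝ) (v : ℝ → ℝ)
    (hv : MemVh N v) (hv1 : v 1 = 0)
    (hβ : 0 < β) (hπ : β*(1/(N:ℝ) - Real.log (1/(N:ℝ))) < π)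
    (hA0 : 0 < 1/((m:ℝ)+3) - 2*(((m:ℝ)+1)^2/4 + β^2)/(((m:ℝ)+3)*((m:ℝ)+2)*((m:ℝ)+1)))
    (hACB : ((((m:ℝ)+1)^2/4 + β^2)/(((m:ℝ)+2)*((m:ℝ)+1)))^2 ≤
      (1/((m:ℝ)+3) - 2*(((m:ℝ)+1)^2/4 + β^2)/(((m:ℝ)+3)*((m:ℝ)+2)*((m:ℝ)+1))) *
      (Kc m β (1/(N:ℝ)) (1/(N:ℝ)) - (((m:ℝ)+1)^2/4 + β^2)/((m:ℝ)+1))) :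
    (((m:ℝ)+1)^2/4 + β^2) * ∫ r in (0:ℝ)..1, r^m*(v r)^2 ≤
      ∫ r in (0:ℝ)..1, r^(m+2)*(deriv v r)^2 := by
  set h : ℝ := 1/(N:ℝ) with hh_def
  have hN0 : (0:ℝ) < N := by exact_mod_cast Nat.pos_of_ne_zero (by omega)
  have hh : 0 < h := by positivity
  set μ : ℝ := ((m:ℝ)+1)^2/4 + β^2 with hμ_def
  set x : ℕ → ℝ := fun k => (k:ℝ)/(N:ℝ) with hx_def
  have hx0 : x 0 = 0 := by simp [hx_def]
  have hxN : x N = 1 := by simp only [hx_def]; field_simp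
  have hx1 : x 1 = h := by simp [hx_def, hh_def]
  have hxmono : ∀ k : ℕ, x k ≤ x (k+1) := by
    intro k; simp only [hx_def]; push_cast
    gcongr
    linarith
  have hxnonneg : ∀ k : ℕ, 0 ≤ x k := by
    intro k; simp only [hx_def]; positivity
  have hxle1 : ∀ k : ℕ, k ≤ N → x k ≤ 1 := by
    intro k hk; simp only [hx_def]
    rw [div_le_one hN0]; exact_mod_cast hk
  have hxh : ∀ k : ℕ, 1 ≤ k → h ≤ x k := by
    intro k hk; rw [← hx1]; simp only [hx_def]
    gcongr

  -- affine pieces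
  have H : ∀ k : ℕ, ∃ a b : ℝ, k < N →
      ∀ y ∈ Set.Icc (x k) (x (k+1)), v y = a * y + b := by
    intro k
    by_cases hk : k < N
    · obtain ⟨a, b, hab⟩ := hv.2 k hk
      refine ⟨a, b, fun _ y hy => hab y ?_⟩
      have hcast : ((k:ℝ)+1)/(N:ℝ) = (((k+1:ℕ)):ℝ)/(N:ℝ) := by push_cast; ring
      rw [hcast]; exact hy
    · exact ⟨0, 0, fun hc => absurd hc hk⟩
  choose A B hAB using H
  -- node values of the boundary function
  set GG : ℕ → ℝ := fun k => -(Kc m β h (x k)) * (x k)^(m+1) * (v (x k))^2 with hGG_def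
  have hGb_node : ∀ k : ℕ, k < N → Gb m β h (A k) (B k) (x k) = GG k ∧
      Gb m β h (A k) (B k) (x (k+1)) = GG (k+1) := by
    intro k hk
    constructor
    · simp only [Gb, hGG_def]
      rw [← hAB k hk (x k) ⟨le_refl _, hxmono k⟩]
    · simp only [Gb, hGG_def]
      rw [← hAB k hk (x (k+1)) ⟨hxmono k, le_refl _⟩]
  have hGG0 : GG 0 = 0 := by simp [hGG_def, hx0]
  have hGGN : GG N = 0 := by simp [hGG_def, hxN, hv1]
  -- a.e. derivative identification on each interval
  have hderiv : ∀ k : ℕ, k < N → ∀ r ∈ Set.Ioo (x k) (x (k+1)), deriv v r = A k := by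
    intro k hk r hr
    have hnb : Set.Icc (x k) (x (k+1)) ∈ nhds r := Icc_mem_nhds hr.1 hr.2
    have heq : v =ᶠ[nhds r] (fun y => A k * y + B k) :=
      Filter.eventuallyEq_of_mem hnb (fun y hy => hAB k hk y hy)
    rw [Filter.EventuallyEq.deriv_eq heq]
    simpa using (((hasDerivAt_id r).const_mul (A k)).add_const (B k)).deriv
  have haeI : ∀ k : ℕ, k < N → ∀ᵐ r ∂volume, r ∈ Set.uIoc (x k) (x (k+1)) →
      r^(m+2)*(deriv v r)^2 = r^(m+2)*(A k)^2 := by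
    intro k hk
    have hne : ∀ᵐ (r:ℝ) ∂volume, r ∉ ({x (k+1)} : Set ℝ) :=
      (Set.countable_singleton _).ae_notMem volume
    filter_upwards [hne] with r hr hrI
    rw [Set.uIoc_of_le (hxmono k)] at hrI
    have : r ∈ Set.Ioo (x k) (x (k+1)) := ⟨hrI.1, lt_of_le_of_ne hrI.2 (by simpa using hr)⟩
    rw [hderiv k hk r this]
  -- integrability
  have hint1 : ∀ k : ℕ, k < N → IntervalIntegrable
      (fun r => r^(m+2)*(deriv v r)^2) volume (x k) (x (k+1)) := by
    intro k hk
    apply IntervalIntegrable.congr_ae (f := fun r => r^(m+2)*(A k)^2)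
    · apply Continuous.intervalIntegrable; fun_prop
    · exact Filter.EventuallyEq.symm ((ae_restrict_iff' measurableSet_uIoc).2 (haeI k hk))
  have hvc : ContinuousOn v (Set.Icc 0 1) := hv.1
  have hsub : ∀ k : ℕ, k < N → Set.uIcc (x k) (x (k+1)) ⊆ Set.Icc 0 1 := by
    intro k hk
    rw [Set.uIcc_of_le (hxmono k)]
    intro y hy
    exact ⟨le_trans (hxnonneg k) hy.1, le_trans hy.2 (hxle1 (k+1) hk)⟩
  have hint2 : ∀ k : ℕ, k < N → IntervalIntegrable
      (fun r => r^m*(v r)^2) volume (x k) (x (k+1)) := by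
    intro k hk
    apply ContinuousOn.intervalIntegrable
    exact ((continuousOn_pow m).mono (hsub k hk)).mul (((hvc.mono (hsub k hk))).pow 2)
  -- integral congruence on each interval
  have hIeq1 : ∀ k : ℕ, k < N → (∫ r in x k..x (k+1), r^(m+2)*(deriv v r)^2)
      = ∫ r in x k..x (k+1), r^(m+2)*(A k)^2 := by
    intro k hk
    exact intervalIntegral.integral_congr_ae (haeI k hk)
  have hIeq2 : ∀ k : ℕ, k < N → (∫ r in x k..x (k+1), r^m*(v r)^2)
      = ∫ r in x k..x (k+1), r^m*(A k*r+B k)^2 := by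
    intro k hk
    apply intervalIntegral.integral_congr
    intro y hy
    rw [Set.uIcc_of_le (hxmono k)] at hy
    show y^m*(v y)^2 = y^m*(A k*y+B k)^2
    rw [hAB k hk y hy]
  -- per-interval inequality
  have hper : ∀ k : ℕ, k < N →
      μ * (∫ r in x k..x (k+1), r^m*(v r)^2) ≤
      (∫ r in x k..x (k+1), r^(m+2)*(deriv v r)^2) - (GG (k+1) - GG k) := by
    intro k hk
    rw [hIeq1 k hk, hIeq2 k hk, ← (hGb_node k hk).1, ← (hGb_node k hk).2]
    rcases Nat.eq_zero_or_pos k with hk0 | hk1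
    · subst hk0
      rw [hx0, hx1]
      exact first_interval m β h (A 0) (B 0) μ (Kc m β h h) _ _ _ hh rfl rfl rfl rfl hA0 hACB
    · have hlogh : Real.log h = - Real.log N := by
        rw [hh_def, one_div, Real.log_inv]
      exact interval_ineq m β h (A k) (B k) (x k) (x (k+1)) hh (hxh k hk1) (hxmono k)
        (hxle1 (k+1) hk) hβ hπ
  -- sum up over k
  have hsum1 : ∑ k ∈ Finset.range N, ∫ r in x k..x (k+1), r^(m+2)*(deriv v r)^2
      = ∫ r in (0:ℝ)..1, r^(m+2)*(deriv v r)^2 := by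
    rw [intervalIntegral.sum_integral_adjacent_intervals hint1]
    rw [hx0, hxN]
  have hsum2 : ∑ k ∈ Finset.range N, ∫ r in x k..x (k+1), r^m*(v r)^2
      = ∫ r in (0:ℝ)..1, r^m*(v r)^2 := by
    rw [intervalIntegral.sum_integral_adjacent_intervals hint2]
    rw [hx0, hxN]
  have hsumG : ∑ k ∈ Finset.range N, (GG (k+1) - GG k) = 0 := by
    rw [Finset.sum_range_sub GG N, hGG0, hGGN]; ring
  have := Finset.sum_le_sum (fun k hk => hper k (Finset.mem_range.1 hk))
  rw [Finset.sum_sub_distrib, hsum1, hsumG, ← Finset.mul_sum, hsum2] at this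
  linarith

lemma den_pos (m : ℕ) (v : ℝ → ℝ) (hvc : ContinuousOn v (Set.Icc 0 1)) (hv1 : v 1 = 0)
    (hex : ∃ x ∈ Set.Icc (0:ℝ) 1, v x ≠ 0) : 0 < ∫ r in (0:ℝ)..1, r^m*(v r)^2 := by
  obtain ⟨x₀, hx₀mem, hx₀⟩ := hex
  have hx₀lt : x₀ < 1 := lt_of_le_of_ne hx₀mem.2 (fun h => hx₀ (by rw [h, hv1]))
  have hε : 0 < |v x₀|/2 := by positivity
  obtain ⟨δ, hδ, hδ2⟩ := Metric.continuousWithinAt_iff.1 (hvc x₀ hx₀mem) (|v x₀|/2) hε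
  set e : ℝ := min (x₀+δ) 1 with he_def
  have hx₀e : x₀ < e := lt_min (by linarith) hx₀lt
  set d : ℝ := (x₀+e)/2 with hd_def
  set c : ℝ := (x₀+d)/2 with hc_def
  have hx₀d : x₀ < d := by simp only [hd_def]; linarith
  have hx₀c : x₀ < c := by simp only [hc_def]; linarith
  have hcd : c < d := by simp only [hc_def]; linarith
  have hde : d < e := by simp only [hd_def]; linarith
  have hd1 : d ≤ 1 := le_of_lt (lt_of_lt_of_le hde (min_le_right _ _))
  have hc0 : 0 < c := lt_of_le_of_lt hx₀mem.1 hx₀c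
  have hlb : ∀ y ∈ Set.Icc c d, (v x₀)^2/4 ≤ (v y)^2 := by
    intro y hy
    have hy01 : y ∈ Set.Icc (0:ℝ) 1 := ⟨le_trans hc0.le hy.1, le_trans hy.2 hd1⟩
    have hdist : dist y x₀ < δ := by
      rw [Real.dist_eq, abs_lt]
      constructor
      · linarith [hy.1]
      · have : y ≤ d := hy.2
        have : d < x₀ + δ := by
          have := min_le_left (x₀+δ) 1
          simp only [hd_def]; linarith
        linarith
    have := hδ2 hy01 hdist
    rw [Real.dist_eq] at this
    have h1 : |v x₀| - |v y| ≤ |v y - v x₀| := by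
      have := abs_sub_abs_le_abs_sub (v x₀) (v y)
      rw [abs_sub_comm] at this; linarith
    have h2 : |v x₀|/2 ≤ |v y| := by linarith
    have e1 : (v x₀)^2 = |v x₀|^2 := (sq_abs _).symm
    have e2 : (v y)^2 = |v y|^2 := (sq_abs _).symm
    rw [e1, e2]
    nlinarith [abs_nonneg (v y), abs_nonneg (v x₀)]
  set f : ℝ → ℝ := fun r => r^m*(v r)^2 with hf_def
  have hfc : ∀ a b : ℝ, 0 ≤ a → b ≤ 1 → a ≤ b → IntervalIntegrable f volume a b := by
    intro a b ha hb hab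
    apply ContinuousOn.intervalIntegrable
    have hsub : Set.uIcc a b ⊆ Set.Icc 0 1 := by
      rw [Set.uIcc_of_le hab]; intro y hy; exact ⟨le_trans ha hy.1, le_trans hy.2 hb⟩
    exact ((continuousOn_pow m).mono hsub).mul ((hvc.mono hsub).pow 2)
  have hsplit1 : ∫ r in (0:ℝ)..1, f r = (∫ r in (0:ℝ)..c, f r) + ∫ r in c..1, f r :=
    (intervalIntegral.integral_add_adjacent_intervals (hfc 0 c le_rfl (le_trans hcd.le hd1) hc0.le)
      (hfc c 1 hc0.le le_rfl (le_trans hcd.le hd1))).symm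
  have hsplit2 : ∫ r in c..(1:ℝ), f r = (∫ r in c..d, f r) + ∫ r in d..1, f r :=
    (intervalIntegral.integral_add_adjacent_intervals (hfc c d hc0.le hd1 hcd.le)
      (hfc d 1 (le_trans hc0.le hcd.le) le_rfl hd1)).symm
  have hnn1 : 0 ≤ ∫ r in (0:ℝ)..c, f r := by
    apply intervalIntegral.integral_nonneg hc0.le
    intro u hu; have hu0 : 0 ≤ u := hu.1; simp only [hf_def]; positivity
  have hnn2 : 0 ≤ ∫ r in d..(1:ℝ), f r := by
    apply intervalIntegral.integral_nonneg hd1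
    intro u hu
    have : 0 ≤ u := le_trans hc0.le (le_trans hcd.le hu.1)
    simp only [hf_def]; positivity
  have hmid : c^m * ((v x₀)^2/4) * (d - c) ≤ ∫ r in c..d, f r := by
    have hconst : ∫ _ in c..d, c^m * ((v x₀)^2/4) = c^m * ((v x₀)^2/4) * (d - c) := by
      rw [intervalIntegral.integral_const]; ring_nf
    rw [← hconst]
    apply intervalIntegral.integral_mono_on hcd.le
      (intervalIntegrable_const) (hfc c d hc0.le hd1 hcd.le)
    intro y hy
    have h1 : c^m ≤ y^m := pow_le_pow_left₀ hc0.le hy.1 m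
    have h2 := hlb y hy
    have h3 : (0:ℝ) ≤ (v x₀)^2/4 := by positivity
    calc c^m * ((v x₀)^2/4) ≤ y^m * ((v x₀)^2/4) := by nlinarith
    _ ≤ y^m * (v y)^2 := by
        have hy0 : 0 ≤ y^m := le_trans (by positivity) h1
        nlinarith
  have hmidpos : 0 < c^m * ((v x₀)^2/4) * (d - c) := by
    have : 0 < (v x₀)^2 := by positivity
    have : 0 < d - c := by linarith
    positivity
  have : 0 < ∫ r in c..d, f r := lt_of_lt_of_le hmidpos hmid
  calc (0:ℝ) < (∫ r in (0:ℝ)..c, f r) + ((∫ r in c..d, f r) + ∫ r in d..1, f r) := by linarith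
  _ = ∫ r in (0:ℝ)..1, f r := by rw [hsplit1, hsplit2]

lemma Kc_lower (m N : ℕ) (hN : 2 ≤ N) (c₀ : ℝ)
    (hc₀ : c₀ = 8*((m:ℝ)+2)/(((m:ℝ)+3)*((m:ℝ)+1))) :
    ((m:ℝ)+1)/2 - 1/(c₀ + 1/Real.log N) ≤
      Kc m (π/(Real.log N + c₀ + 1/(N:ℝ) + 1/Real.log N)) (1/(N:ℝ)) (1/(N:ℝ)) := by
  set L : ℝ := Real.log N with hL_def
  have hL : 0 < L := by
    rw [hL_def]
    apply Real.log_pos; exact_mod_cast by omega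
  have hN0 : (0:ℝ) < N := by positivity
  set h : ℝ := 1/(N:ℝ) with hh_def
  have hh : 0 < h := by positivity
  have hc₀pos : 0 < c₀ := by rw [hc₀]; positivity
  set D : ℝ := L + c₀ + h + 1/L with hD_def
  have hD : 0 < D := by rw [hD_def]; positivity
  set β : ℝ := π/D with hβ_def
  have hβ : 0 < β := by rw [hβ_def]; exact div_pos Real.pi_pos hD
  have hlogh : Real.log h = -L := by rw [hh_def, one_div, Real.log_inv]
  set ε : ℝ := β*(c₀ + 1/L) with hε_def
  have hεpos : 0 < ε := by rw [hε_def]; positivity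
  have hβD : β*D = π := by rw [hβ_def]; field_simp
  have hθε : β*(h - Real.log h) = π - ε := by
    rw [hlogh, hε_def, ← hβD, hD_def]; ring
  have hεlt : ε < π := by
    rw [hε_def, hβ_def]
    rw [div_mul_eq_mul_div, div_lt_iff₀ hD]
    have : c₀ + 1/L < D := by rw [hD_def]; linarith
    nlinarith [Real.pi_pos]
  have hsinε : 0 < Real.sin ε := Real.sin_pos_of_pos_of_lt_pi hεpos hεlt
  rw [Kc, hθε, Real.cos_pi_sub, Real.sin_pi_sub]
  have key : -(1/(c₀ + 1/L)) ≤ β * (-Real.cos ε / Real.sin ε) := by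
    rcases le_or_gt (Real.cos ε) 0 with hcos | hcos
    · have : 0 ≤ β * (-Real.cos ε / Real.sin ε) := by
        apply mul_nonneg hβ.le
        apply div_nonneg (by linarith) hsinε.le
      have : 0 ≤ 1/(c₀ + 1/L) := by positivity
      linarith
    · have hεhalf : ε < π/2 := by
        by_contra hcon
        push_neg at hcon
        have := Real.cos_nonpos_of_pi_div_two_le_of_le hcon (by linarith [Real.pi_pos])
        linarith
      have htan := Real.lt_tan hεpos hεhalf
      rw [Real.tan_eq_sin_div_cos] at htan
      -- sin ε / cos ε > ε ⇒ cos ε / sin ε < 1/ε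
      have h1 : Real.cos ε / Real.sin ε < 1/ε := by
        rw [div_lt_div_iff₀ hsinε hεpos]
        rw [lt_div_iff₀ hcos] at htan
        linarith
      have h2 : β * (Real.cos ε / Real.sin ε) < β * (1/ε) := by
        apply mul_lt_mul_of_pos_left h1 hβ
      have h3 : β * (1/ε) = 1/(c₀ + 1/L) := by
        rw [hε_def]
        have hx : c₀ + 1/L ≠ 0 := by positivity
        field_simp
      rw [h3] at h2
      have : β * (-Real.cos ε / Real.sin ε) = -(β * (Real.cos ε / Real.sin ε)) := by ring
      rw [this]
      linarith
  linarith

def cc (m : ℕ) : ℝ := 8*((m:ℝ)+2)/(((m:ℝ)+3)*((m:ℝ)+1))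
def LL (N : ℕ) : ℝ := Real.log N
def bet (m N : ℕ) : ℝ := π/(LL N + cc m + 1/(N:ℝ) + 1/LL N)
def muu (m N : ℕ) : ℝ := ((m:ℝ)+1)^2/4 + (bet m N)^2
def AA (m N : ℕ) : ℝ := 1/((m:ℝ)+3) - 2*muu m N/(((m:ℝ)+3)*((m:ℝ)+2)*((m:ℝ)+1))
def BB (m N : ℕ) : ℝ := muu m N/(((m:ℝ)+2)*((m:ℝ)+1))

def PSI1 (m : ℕ) (x : ℝ) : ℝ :=
  -(1/((m:ℝ)+3) - (((m:ℝ)+1)^2/2)/(((m:ℝ)+3)*((m:ℝ)+2)*((m:ℝ)+1)))/((m:ℝ)+1)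
  - (2/(((m:ℝ)+3)*((m:ℝ)+2)*((m:ℝ)+1))) *
      ((((m:ℝ)+1)/2) - (((m:ℝ)+1)^2/4)/((m:ℝ)+1) - 1/cc m - x/((m:ℝ)+1))
  - ((((m:ℝ)+1)^2/2) + x)/((((m:ℝ)+2)*((m:ℝ)+1))^2)

lemma cc_pos (m : ℕ) : 0 < cc m := by unfold cc; positivity

lemma alg_id (m : ℕ) (b L : ℝ) (hL : 0 < L) :
    (1/((m:ℝ)+3) - 2*(((m:ℝ)+1)^2/4 + b^2)/(((m:ℝ)+3)*((m:ℝ)+2)*((m:ℝ)+1))) *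
      (((m:ℝ)+1)/2 - 1/(cc m + 1/L) - (((m:ℝ)+1)^2/4 + b^2)/((m:ℝ)+1))
    - ((((m:ℝ)+1)^2/4 + b^2)/(((m:ℝ)+2)*((m:ℝ)+1)))^2
    = b^2 * PSI1 m (b^2)
      + (1/((m:ℝ)+3) - 2*(((m:ℝ)+1)^2/4 + b^2)/(((m:ℝ)+3)*((m:ℝ)+2)*((m:ℝ)+1)))
        * (1/(cc m*(cc m + 1/L)))*(1/L) := by
  have h1 : ((m:ℝ)+1) ≠ 0 := by positivity
  have h2 : ((m:ℝ)+2) ≠ 0 := by positivity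
  have h3 : ((m:ℝ)+3) ≠ 0 := by positivity
  have h4 : cc m ≠ 0 := (cc_pos m).ne'
  have h5 : cc m + 1/L ≠ 0 := by have := cc_pos m; positivity
  have h6 : L ≠ 0 := hL.ne'
  unfold PSI1 cc at *
  field_simp
  ring

lemma tendsto_LL : Tendsto LL atTop atTop :=
  Real.tendsto_log_atTop.comp tendsto_natCast_atTop_atTop

lemma tendsto_invLL : Tendsto (fun N => 1/LL N) atTop (nhds 0) := by
  simp only [one_div]; exact tendsto_LL.inv_tendsto_atTop

lemma tendsto_hh : Tendsto (fun N : ℕ => 1/(N:ℝ)) atTop (nhds 0) :=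
  tendsto_one_div_atTop_nhds_zero_nat

lemma tendsto_DD (m : ℕ) : Tendsto (fun N => LL N + cc m + 1/(N:ℝ) + 1/LL N) atTop atTop := by
  have h1 : Tendsto (fun N => LL N + cc m) atTop atTop :=
    tendsto_atTop_add_const_right atTop (cc m) tendsto_LL
  have h2 : Tendsto (fun N : ℕ => (1:ℝ)/(N:ℝ) + 1/LL N) atTop (nhds (0+0)) :=
    tendsto_hh.add tendsto_invLL
  have := h1.atTop_add h2
  convert this using 2 with N
  ring

lemma tendsto_bet (m : ℕ) : Tendsto (bet m) atTop (nhds 0) :=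
  tendsto_const_nhds.div_atTop (tendsto_DD m)

lemma tendsto_bet2 (m : ℕ) : Tendsto (fun N => (bet m N)^2) atTop (nhds 0) := by
  simpa using (tendsto_bet m).pow 2

lemma tendsto_muu (m : ℕ) : Tendsto (muu m) atTop (nhds (((m:ℝ)+1)^2/4)) := by
  have h0 : Tendsto (fun _ : ℕ => ((m:ℝ)+1)^2/4) atTop (nhds (((m:ℝ)+1)^2/4)) :=
    tendsto_const_nhds
  have := h0.add (tendsto_bet2 m)
  rw [add_zero] at this; exact this

lemma tendsto_AA (m : ℕ) :
    Tendsto (AA m) atTop (nhds (1/((m:ℝ)+3)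
      - 2*(((m:ℝ)+1)^2/4)/(((m:ℝ)+3)*((m:ℝ)+2)*((m:ℝ)+1)))) := by
  have := ((tendsto_muu m).const_mul 2).div_const (((m:ℝ)+3)*((m:ℝ)+2)*((m:ℝ)+1))
  have h0 : Tendsto (fun _ : ℕ => 1/((m:ℝ)+3)) atTop (nhds (1/((m:ℝ)+3))) :=
    tendsto_const_nhds
  have h2 := h0.sub this
  unfold AA
  convert h2 using 1

lemma A0_pos (m : ℕ) : 0 < 1/((m:ℝ)+3) - 2*(((m:ℝ)+1)^2/4)/(((m:ℝ)+3)*((m:ℝ)+2)*((m:ℝ)+1)) := by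
  have key : 1/((m:ℝ)+3) - 2*(((m:ℝ)+1)^2/4)/(((m:ℝ)+3)*((m:ℝ)+2)*((m:ℝ)+1))
      = 1/(2*(((m:ℝ)+2))) := by
    have h1 : ((m:ℝ)+1) ≠ 0 := by positivity
    have h2 : ((m:ℝ)+2) ≠ 0 := by positivity
    have h3 : ((m:ℝ)+3) ≠ 0 := by positivity
    field_simp
    ring
  rw [key]; positivity

lemma eventually_L_ge_one : ∀ᶠ N : ℕ in atTop, 1 ≤ LL N := by
  have := tendsto_LL.eventually_ge_atTop 1
  exact this

lemma tendsto_Lbet2 (m : ℕ) : Tendsto (fun N => LL N * (bet m N)^2) atTop (nhds 0) := by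
  apply tendsto_of_tendsto_of_tendsto_of_le_of_le' tendsto_const_nhds
    (tendsto_const_nhds.div_atTop tendsto_LL (a := π^2))
  · filter_upwards [eventually_L_ge_one, eventually_ge_atTop 1] with N hL hN1
    have hb : 0 ≤ (bet m N)^2 := sq_nonneg _
    nlinarith
  · filter_upwards [eventually_L_ge_one, eventually_ge_atTop 1] with N hL hN1
    have hL0 : 0 < LL N := by linarith
    have hN0 : (0:ℝ) < N := by exact_mod_cast hN1
    have hD : LL N ≤ LL N + cc m + 1/(N:ℝ) + 1/LL N := by
      have := cc_pos m
      have : 0 < 1/(N:ℝ) := by positivity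
      have : 0 < 1/LL N := by positivity
      linarith [cc_pos m]
    have hDpos : 0 < LL N + cc m + 1/(N:ℝ) + 1/LL N := lt_of_lt_of_le hL0 hD
    have hbet : bet m N ≤ π/LL N := by
      unfold bet
      apply div_le_div_of_nonneg_left Real.pi_pos.le hL0 hD
    have hbetpos : 0 < bet m N := by
      unfold bet
      exact div_pos Real.pi_pos hDpos
    calc LL N * (bet m N)^2 ≤ LL N * (π/LL N)^2 := by
          apply mul_le_mul_of_nonneg_left _ hL0.le
          exact pow_le_pow_left₀ hbetpos.le hbet 2
    _ = π^2/LL N := by field_simp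

lemma continuous_PSI1 (m : ℕ) : Continuous (PSI1 m) := by
  unfold PSI1
  fun_prop

lemma tendsto_W (m : ℕ) :
    Tendsto (fun N => (LL N * (bet m N)^2) * PSI1 m ((bet m N)^2)
      + AA m N / (cc m * (cc m + 1/LL N))) atTop
      (nhds ((1/((m:ℝ)+3) - 2*(((m:ℝ)+1)^2/4)/(((m:ℝ)+3)*((m:ℝ)+2)*((m:ℝ)+1)))
        / (cc m * cc m))) := by
  have t1 : Tendsto (fun N => PSI1 m ((bet m N)^2)) atTop (nhds (PSI1 m 0)) :=
    ((continuous_PSI1 m).tendsto 0).comp (tendsto_bet2 m)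
  have t2 := (tendsto_Lbet2 m).mul t1
  have t3 : Tendsto (fun N => cc m * (cc m + 1/LL N)) atTop (nhds (cc m * (cc m + 0))) :=
    tendsto_const_nhds.mul (tendsto_const_nhds.add tendsto_invLL)
  have hcc : cc m * (cc m + 0) ≠ 0 := by
    have := cc_pos m; simp only [add_zero]; positivity
  have t4 := (tendsto_AA m).div t3 hcc
  have := t2.add t4
  simpa using this

lemma W_limit_pos (m : ℕ) :
    0 < (1/((m:ℝ)+3) - 2*(((m:ℝ)+1)^2/4)/(((m:ℝ)+3)*((m:ℝ)+2)*((m:ℝ)+1))) / (cc m * cc m) := by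
  have := A0_pos m
  have := cc_pos m
  positivity

lemma eventually_PSD (m : ℕ) : ∀ᶠ N : ℕ in atTop,
    (BB m N)^2 ≤ AA m N * (((m:ℝ)+1)/2 - 1/(cc m + 1/LL N) - muu m N/((m:ℝ)+1)) := by
  filter_upwards [eventually_L_ge_one,
    (tendsto_W m).eventually (eventually_gt_nhds (W_limit_pos m))] with N hL hW
  have hL0 : 0 < LL N := by linarith
  have halg := alg_id m (bet m N) (LL N) hL0
  have hcc := cc_pos m
  have h5 : 0 < cc m + 1/LL N := by positivity
  -- identity : expression = W * (1/L)
  have hgoal : AA m N * (((m:ℝ)+1)/2 - 1/(cc m + 1/LL N) - muu m N/((m:ℝ)+1)) - (BB m N)^2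
      = ((LL N * (bet m N)^2) * PSI1 m ((bet m N)^2)
        + AA m N / (cc m * (cc m + 1/LL N))) * (1/LL N) := by
    unfold AA BB muu
    rw [halg]
    field_simp
  have hW2 : 0 ≤ ((LL N * (bet m N)^2) * PSI1 m ((bet m N)^2)
      + AA m N / (cc m * (cc m + 1/LL N))) * (1/LL N) := by
    apply mul_nonneg hW.le
    positivity
  linarith [hgoal, hW2]

lemma tendsto_LoverE (m : ℕ) :
    Tendsto (fun N => LL N/(cc m + 1/(N:ℝ) + LL N)) atTop (nhds 1) := by
  have t1 : Tendsto (fun N : ℕ => (cc m + 1/(N:ℝ))/LL N + 1) atTop (nhds (0+1)) := by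
    apply Tendsto.add_const
    exact (tendsto_const_nhds.add tendsto_hh).div_atTop tendsto_LL
  have t2 : Tendsto (fun N : ℕ => ((cc m + 1/(N:ℝ))/LL N + 1)⁻¹) atTop (nhds (0+1)⁻¹) :=
    t1.inv₀ (by norm_num)
  have : ∀ᶠ N : ℕ in atTop, ((cc m + 1/(N:ℝ))/LL N + 1)⁻¹ = LL N/(cc m + 1/(N:ℝ) + LL N) := by
    filter_upwards [eventually_L_ge_one, eventually_ge_atTop 1] with N hL hN1
    have hL0 : 0 < LL N := by linarith
    have hN0 : (0:ℝ) < N := by exact_mod_cast hN1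
    have hc := cc_pos m
    have hEne : cc m + 1/(N:ℝ) + LL N ≠ 0 := by positivity
    field_simp
  simpa using t2.congr' this

lemma tendsto_LoverD (m : ℕ) :
    Tendsto (fun N => LL N/(LL N + cc m + 1/(N:ℝ) + 1/LL N)) atTop (nhds 1) := by
  have t1 : Tendsto (fun N : ℕ => (cc m + 1/(N:ℝ) + 1/LL N)/LL N + 1) atTop (nhds (0+1)) := by
    apply Tendsto.add_const
    exact ((tendsto_const_nhds.add tendsto_hh).add tendsto_invLL).div_atTop tendsto_LL
  have t2 : Tendsto (fun N : ℕ => ((cc m + 1/(N:ℝ) + 1/LL N)/LL N + 1)⁻¹) atTop (nhds (0+1)⁻¹) :=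
    t1.inv₀ (by norm_num)
  have : ∀ᶠ N : ℕ in atTop, ((cc m + 1/(N:ℝ) + 1/LL N)/LL N + 1)⁻¹
      = LL N/(LL N + cc m + 1/(N:ℝ) + 1/LL N) := by
    filter_upwards [eventually_L_ge_one, eventually_ge_atTop 1] with N hL hN1
    have hL0 : 0 < LL N := by linarith
    have hN0 : (0:ℝ) < N := by exact_mod_cast hN1
    have hc := cc_pos m
    have hD : 0 < LL N + cc m + 1/(N:ℝ) + 1/LL N := by positivity
    field_simp
    ring
  simpa using t2.congr' this

lemma eventually_E4 (m : ℕ) (η : ℝ) (hη : 0 < η) : ∀ᶠ N : ℕ in atTop,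
    π^2/(cc m + 1/(N:ℝ) + LL N)^2 - η/(LL N)^2 ≤ (bet m N)^2 := by
  have tV : Tendsto (fun N => π^2*(LL N/(cc m + 1/(N:ℝ) + LL N))^2
      - π^2*(LL N/(LL N + cc m + 1/(N:ℝ) + 1/LL N))^2) atTop (nhds 0) := by
    have t1 := ((tendsto_LoverE m).pow 2).const_mul (π^2)
    have t2 := ((tendsto_LoverD m).pow 2).const_mul (π^2)
    have := t1.sub t2
    simpa using this
  filter_upwards [eventually_L_ge_one, eventually_ge_atTop 1,
    tV.eventually_lt_const hη] with N hL hN1 hV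
  have hL0 : 0 < LL N := by linarith
  have hN0 : (0:ℝ) < N := by exact_mod_cast hN1
  have hc := cc_pos m
  have hE : 0 < cc m + 1/(N:ℝ) + LL N := by positivity
  have hD : 0 < LL N + cc m + 1/(N:ℝ) + 1/LL N := by positivity
  have hid1 : π^2*(LL N/(cc m + 1/(N:ℝ) + LL N))^2 = (LL N)^2 * (π^2/(cc m + 1/(N:ℝ) + LL N)^2) := by
    field_simp
  have hid2 : π^2*(LL N/(LL N + cc m + 1/(N:ℝ) + 1/LL N))^2 = (LL N)^2 * (bet m N)^2 := by
    unfold bet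
    field_simp
  rw [hid1, hid2] at hV
  have step : (LL N)^2 * (π^2/(cc m + 1/(N:ℝ) + LL N)^2) - (LL N)^2 * (bet m N)^2 < η := hV
  have hL2 : 0 < (LL N)^2 := by positivity
  have h10 : π^2/(cc m + 1/(N:ℝ) + LL N)^2 - (bet m N)^2 ≤ η/(LL N)^2 := by
    rw [le_div_iff₀ hL2]
    nlinarith [step]
  linarith

lemma eventually_AA_pos (m : ℕ) : ∀ᶠ N : ℕ in atTop, 0 < AA m N :=
  (tendsto_AA m).eventually (eventually_gt_nhds (A0_pos m))

lemma set_nonempty (n N : ℕ) : ∃ s : ℝ, s ∈ { s : ℝ | ∃ v : ℝ → ℝ, MemVh N v ∧ v 1 = 0 ∧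
    (∃ x ∈ Set.Icc (0:ℝ) 1, v x ≠ 0) ∧
    s = (∫ r in (0:ℝ)..1, r ^ (n - 1) * (deriv v r) ^ 2)
        / (∫ r in (0:ℝ)..1, r ^ (n - 3) * (v r) ^ 2) } := by
  refine ⟨_, ⟨fun x => 1 - x, ⟨?_, ?_⟩, by norm_num, ⟨0, by norm_num, by norm_num⟩, rfl⟩⟩
  · apply Continuous.continuousOn; fun_prop
  · intro k hk
    exact ⟨-1, 1, fun x _ => by ring⟩

theorem discrete_hardy_nd_lower_bound (n : ℕ) (hn : 3 ≤ n) :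
    ∀ η : ℝ, 0 < η → ∃ N₀ : ℕ, ∀ N : ℕ, N₀ ≤ N →
      SdiscN n N ≥ ((n : ℝ) - 2) ^ 2 / 4
        + π ^ 2 / (8 * ((n : ℝ) - 1) / ((n : ℝ) * ((n : ℝ) - 2)) + 1 / (N : ℝ)
            + |Real.log (1 / (N : ℝ))|) ^ 2
        - η / (Real.log (1 / (N : ℝ))) ^ 2 := by
  intro η hη
  obtain ⟨m, rfl⟩ : ∃ m, n = m + 3 := ⟨n - 3, by omega⟩
  obtain ⟨N₁, hN₁⟩ := eventually_atTop.1
    ((eventually_AA_pos m).and ((eventually_PSD m).and (eventually_E4 m η hη)))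
  refine ⟨max N₁ 3, fun N hN => ?_⟩
  obtain ⟨hAA, hPSD, hE4⟩ := hN₁ N (le_trans (le_max_left _ _) hN)
  have hN3 : 3 ≤ N := le_trans (le_max_right _ _) hN
  have hN0 : (0:ℝ) < N := by exact_mod_cast by omega
  -- basic positivity
  have hL1 : 1 ≤ LL N := by
    unfold LL
    rw [Real.le_log_iff_exp_le (by positivity)]
    calc Real.exp 1 ≤ 2.7182818286 := (Real.exp_one_lt_d9).le
    _ ≤ (N:ℝ) := by
        have : (3:ℝ) ≤ (N:ℝ) := by exact_mod_cast hN3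
        linarith
  have hL0 : 0 < LL N := by linarith
  have hcc := cc_pos m
  have hDpos : 0 < LL N + cc m + 1/(N:ℝ) + 1/LL N := by positivity
  have hβ : 0 < bet m N := by unfold bet; exact div_pos Real.pi_pos hDpos
  have hβD : bet m N * (LL N + cc m + 1/(N:ℝ) + 1/LL N) = π := by
    unfold bet; field_simp
  have hlog1N : Real.log (1/(N:ℝ)) = -(LL N) := by
    rw [one_div, Real.log_inv]; rfl
  have hπb : bet m N * (1/(N:ℝ) - Real.log (1/(N:ℝ))) < π := by
    rw [hlog1N]
    have h1 : 0 < 1/LL N := by positivity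
    nlinarith [hβD, mul_pos hβ (add_pos hcc h1)]
  -- the RHS in m-form
  have habs : |Real.log (1/(N:ℝ))| = LL N := by
    rw [hlog1N, abs_neg, abs_of_nonneg hL0.le]
  have hcast : ((m+3:ℕ):ℝ) = (m:ℝ)+3 := by push_cast; ring
  have hRHS : ((((m+3:ℕ)) : ℝ) - 2) ^ 2 / 4
        + π ^ 2 / (8 * ((((m+3:ℕ)) : ℝ) - 1) / ((((m+3:ℕ)) : ℝ) * ((((m+3:ℕ)) : ℝ) - 2)) + 1 / (N : ℝ)
            + |Real.log (1 / (N : ℝ))|) ^ 2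
        - η / (Real.log (1 / (N : ℝ))) ^ 2
      = ((m:ℝ)+1)^2/4 + π^2/(cc m + 1/(N:ℝ) + LL N)^2 - η/(LL N)^2 := by
    rw [hcast, habs, hlog1N]
    have h1 : ((m:ℝ)+1) ≠ 0 := by positivity
    have h3 : ((m:ℝ)+3) ≠ 0 := by positivity
    have hc : 8 * (((m:ℝ)+3) - 1) / (((m:ℝ)+3) * (((m:ℝ)+3) - 2)) = cc m := by
      have e : ((m:ℝ)+3) * (((m:ℝ)+3) - 2) = ((m:ℝ)+3)*((m:ℝ)+1) := by ring
      have e2 : 8*(((m:ℝ)+3) - 1) = 8*((m:ℝ)+2) := by ring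
      rw [e, e2]; rfl
    rw [hc]
    ring_nf
  rw [ge_iff_le, hRHS]
  -- bound each element of the set
  apply le_csInf ⟨_, (set_nonempty (m+3) N).choose_spec⟩
  rintro s ⟨v, hv, hv1, hex, rfl⟩
  have he1 : m+3-1 = m+2 := by omega
  have he3 : m+3-3 = m := by omega
  rw [he1, he3]
  -- main inequality
  have hACB : ((((m:ℝ)+1)^2/4 + (bet m N)^2)/(((m:ℝ)+2)*((m:ℝ)+1)))^2 ≤
      (1/((m:ℝ)+3) - 2*(((m:ℝ)+1)^2/4 + (bet m N)^2)/(((m:ℝ)+3)*((m:ℝ)+2)*((m:ℝ)+1))) *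
      (Kc m (bet m N) (1/(N:ℝ)) (1/(N:ℝ)) - (((m:ℝ)+1)^2/4 + (bet m N)^2)/((m:ℝ)+1)) := by
    have hK := Kc_lower m N (by omega) (cc m) rfl
    have hAA' : (0:ℝ) < 1/((m:ℝ)+3)
        - 2*(((m:ℝ)+1)^2/4 + (bet m N)^2)/(((m:ℝ)+3)*((m:ℝ)+2)*((m:ℝ)+1)) := by
      have : AA m N = 1/((m:ℝ)+3)
          - 2*(((m:ℝ)+1)^2/4 + (bet m N)^2)/(((m:ℝ)+3)*((m:ℝ)+2)*((m:ℝ)+1)) := by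
        unfold AA muu; ring
      rw [← this]; exact hAA
    have hPSD' := hPSD
    unfold BB AA muu at hPSD'
    have hKc' : ((m:ℝ)+1)/2 - 1/(cc m + 1/LL N)
        ≤ Kc m (bet m N) (1/(N:ℝ)) (1/(N:ℝ)) := by
      have : bet m N = π/(Real.log N + cc m + 1/(N:ℝ) + 1/Real.log N) := by
        unfold bet LL; ring_nf
      rw [this]
      exact hK
    calc ((((m:ℝ)+1)^2/4 + (bet m N)^2)/(((m:ℝ)+2)*((m:ℝ)+1)))^2
        ≤ (1/((m:ℝ)+3) - 2*(((m:ℝ)+1)^2/4 + (bet m N)^2)/(((m:ℝ)+3)*((m:ℝ)+2)*((m:ℝ)+1))) *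
          (((m:ℝ)+1)/2 - 1/(cc m + 1/LL N) - (((m:ℝ)+1)^2/4 + (bet m N)^2)/((m:ℝ)+1)) := hPSD'
      _ ≤ _ := by
          apply mul_le_mul_of_nonneg_left _ hAA'.le
          linarith
  have hAA2 : (0:ℝ) < 1/((m:ℝ)+3)
      - 2*(((m:ℝ)+1)^2/4 + (bet m N)^2)/(((m:ℝ)+3)*((m:ℝ)+2)*((m:ℝ)+1)) := by
    have : AA m N = 1/((m:ℝ)+3)
        - 2*(((m:ℝ)+1)^2/4 + (bet m N)^2)/(((m:ℝ)+3)*((m:ℝ)+2)*((m:ℝ)+1)) := by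
      unfold AA muu; ring
    rw [← this]; exact hAA
  have hmain := global_ineq m N (by omega) (bet m N) v hv hv1 hβ hπb hAA2 hACB
  have hden := den_pos m v hv.1 hv1 hex
  rw [le_div_iff₀ hden]
  calc (((m:ℝ)+1)^2/4 + π^2/(cc m + 1/(N:ℝ) + LL N)^2 - η/(LL N)^2)
        * ∫ r in (0:ℝ)..1, r^m * (v r)^2
      ≤ (((m:ℝ)+1)^2/4 + (bet m N)^2) * ∫ r in (0:ℝ)..1, r^m * (v r)^2 := by
        apply mul_le_mul_of_nonneg_right _ hden.le
        linarith [hE4]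
    _ ≤ _ := hmain
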